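/- arXiv:math/0604082 — 4 statements merged into one kernel-verified Lean document; each statement's English description precedes it below -/
import Mathlib

section
/- Let β_1,...,β_n > 1, let Q = (q_{j,j'}) be an n×n symmetric positive semidefinite matrix with q_{j,j} = 1, and let r_1,...,r_n ≥ 0 be the eigenvalues of Q̃ = (√(β_j β_{j'}) q_{j,j'}). If r_j ≥ 1 for all j ≤ n, then ½ Σ_{j≤n} (f(r_j) − log β_j) = Σ_{j≤n} P(β_j). If all r_j > 0 and min_{j≤n} r_j < 1, then ½ Σ_{j≤n} (f(r_j) − log β_j) < Σ_{j≤n} P(β_j). -/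
open MeasureTheory ProbabilityTheory Filter Matrix Topology

noncomputable def stdGaussianPi (N : ℕ) : Measure (Fin N → ℝ) :=
  Measure.pi fun _ => gaussianReal 0 1

instance stdGaussianPi.isProb (N : ℕ) : IsProbabilityMeasure (stdGaussianPi N) := by
  unfold stdGaussianPi; infer_instance

noncomputable def sphereUniform (N : ℕ) : Measure (Fin N → ℝ) :=
  (stdGaussianPi N).map fun x i => Real.sqrt N / Real.sqrt (∑ j, (x j) ^ 2) * x i

instance sphereUniform.isProb (N : ℕ) : IsProbabilityMeasure (sphereUniform N) := by
  rw [sphereUniform]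
  refine Measure.isProbabilityMeasure_map (Measurable.aemeasurable ?_)
  refine measurable_pi_lambda _ fun i => Measurable.mul ?_ (measurable_pi_apply i)
  refine Measurable.div measurable_const ?_
  exact (Finset.measurable_sum Finset.univ fun j _ => (measurable_pi_apply j).pow_const 2).sqrt

noncomputable def overlap {N : ℕ} (σ ρ : Fin N → ℝ) : ℝ :=
  (N : ℝ)⁻¹ * ∑ i, σ i * ρ i

def onSphere {N : ℕ} (σ : Fin N → ℝ) : Prop :=
  ∑ i, (σ i) ^ 2 = (N : ℝ)

noncomputable def disorder2 (N : ℕ) : Measure (Fin N → Fin N → ℝ) :=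
  Measure.pi fun _ => Measure.pi fun _ => gaussianReal 0 1

instance disorder2.isProb (N : ℕ) : IsProbabilityMeasure (disorder2 N) := by
  unfold disorder2; infer_instance

noncomputable def ham2 (N : ℕ) (g : Fin N → Fin N → ℝ) (σ : Fin N → ℝ) : ℝ :=
  (Real.sqrt (2 * N))⁻¹ * ∑ i, ∑ j, g i j * σ i * σ j

/-- f(r) = log r + r²/2 for r ≤ 1 and 2r − 3/2 for r ≥ 1. -/
noncomputable def fOrd (r : ℝ) : ℝ := if r ≤ 1 then Real.log r + r ^ 2 / 2 else 2 * r - 3 / 2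

/-- P(β) = ½(2β − 3/2 − log β), the free energy of a single pure 2-spin spherical
system at inverse temperature β > 1. -/
noncomputable def Pfe (β : ℝ) : ℝ := (1 / 2) * (2 * β - 3 / 2 - Real.log β)

lemma trace_eq_sum_eig {m : ℕ} {A : Matrix (Fin m) (Fin m) ℝ} (hA : A.IsHermitian) :
    A.trace = ∑ j, hA.eigenvalues j := by
  simpa using hA.trace_eq_sum_eigenvalues

lemma fOrd_eq {r : ℝ} (hr : 1 ≤ r) : fOrd r = 2 * r - 3 / 2 := by
  unfold fOrd
  split_ifs with h
  · have : r = 1 := le_antisymm h hr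
    subst this; norm_num
  · rfl

lemma fOrd_lt {r : ℝ} (hr : 0 < r) (hr1 : r < 1) : fOrd r < 2 * r - 3 / 2 := by
  rw [fOrd, if_pos hr1.le]
  have key : StrictAntiOn (fun x : ℝ => 2 * x - 3 / 2 - (Real.log x + x ^ 2 / 2))
      (Set.Ioc 0 1) := by
    apply strictAntiOn_of_deriv_neg (convex_Ioc 0 1)
    · apply ContinuousOn.sub (by fun_prop)
      apply ContinuousOn.add _ (by fun_prop)
      exact Real.continuousOn_log.mono (by intro x hx; simpa using ne_of_gt hx.1)
    · intro x hx
      rw [interior_Ioc] at hx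
      have hx0 : x ≠ 0 := ne_of_gt hx.1
      have : deriv (fun x : ℝ => 2 * x - 3 / 2 - (Real.log x + x ^ 2 / 2)) x
          = 2 - (x⁻¹ + x) := by
        have h1 : HasDerivAt (fun x : ℝ => 2 * x - 3 / 2 - (Real.log x + x ^ 2 / 2))
            (2 - (x⁻¹ + x)) x := by
          have := ((Real.hasDerivAt_log hx0).add
            (((hasDerivAt_id x).pow 2).div_const 2)).const_sub 0 |>.const_add (2 * x - 3 / 2)
          have h2 := (((hasDerivAt_id x).const_mul 2).sub_const (3/2)).sub
            ((Real.hasDerivAt_log hx0).add (((hasDerivAt_pow 2 x)).div_const 2))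
          exact h2.congr_deriv (by norm_num)
        exact h1.deriv
      rw [this]
      have h2 : 2 - (x⁻¹ + x) = -((x - 1) ^ 2 / x) := by
        field_simp; ring
      rw [h2, neg_lt_zero]
      have hx1 : x - 1 ≠ 0 := by nlinarith [hx.2]
      exact div_pos (by positivity) hx.1
  have h1 := key (Set.mem_Ioc.mpr ⟨hr, hr1.le⟩) (Set.mem_Ioc.mpr ⟨one_pos, le_refl 1⟩) hr1
  simp only [Real.log_one] at h1
  nlinarith [h1]

theorem stmt1 (n : ℕ) (hn : 1 ≤ n) (β : Fin n → ℝ) (hβ : ∀ j, 1 < β j)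
    (Q : Matrix (Fin n) (Fin n) ℝ) (hQ : Q.PosSemidef) (hQdiag : ∀ j, Q j j = 1)
    (Qt : Matrix (Fin n) (Fin n) ℝ)
    (hQt : ∀ j j', Qt j j' = Real.sqrt (β j * β j') * Q j j')
    (hQth : Qt.IsHermitian)
    (hr0 : ∀ j, 0 ≤ hQth.eigenvalues j) :
    ((∀ j, 1 ≤ hQth.eigenvalues j) →
      (1 / 2) * ∑ j, (fOrd (hQth.eigenvalues j) - Real.log (β j)) = ∑ j, Pfe (β j)) ∧
    ((∀ j, 0 < hQth.eigenvalues j) → (∃ j, hQth.eigenvalues j < 1) →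
      (1 / 2) * ∑ j, (fOrd (hQth.eigenvalues j) - Real.log (β j)) < ∑ j, Pfe (β j)) := by
  set e := hQth.eigenvalues with he
  have htr : ∑ j, e j = ∑ j, β j := by
    rw [← trace_eq_sum_eig hQth, Matrix.trace]
    apply Finset.sum_congr rfl
    intro j _
    rw [Matrix.diag_apply, hQt j j, hQdiag j, mul_one,
      Real.sqrt_mul_self (le_of_lt (lt_trans one_pos (hβ j)))]
  have hPfe : ∑ j, Pfe (β j) = (1 / 2) * ∑ j, (2 * β j - 3 / 2 - Real.log (β j)) := by
    rw [Finset.mul_sum]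
    exact Finset.sum_congr rfl fun j _ => rfl
  have hsum : ∑ j, (2 * e j - 3 / 2 - Real.log (β j))
      = ∑ j, (2 * β j - 3 / 2 - Real.log (β j)) := by
    have h2 : ∑ j, (2 * e j - 3 / 2 - Real.log (β j))
        - ∑ j, (2 * β j - 3 / 2 - Real.log (β j)) = 2 * (∑ j, e j - ∑ j, β j) := by
      rw [← Finset.sum_sub_distrib, mul_sub, Finset.mul_sum, Finset.mul_sum,
        ← Finset.sum_sub_distrib]
      apply Finset.sum_congr rfl
      intro j _; ring
    rw [htr, sub_self, mul_zero] at h2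
    linarith
  constructor
  · intro hge
    rw [hPfe, ← hsum]
    congr 1
    apply Finset.sum_congr rfl
    intro j _
    rw [fOrd_eq (hge j)]
  · intro hpos ⟨j0, hj0⟩
    rw [hPfe, ← hsum]
    have hlt : ∑ j, (fOrd (e j) - Real.log (β j))
        < ∑ j, (2 * e j - 3 / 2 - Real.log (β j)) := by
      apply Finset.sum_lt_sum
      · intro j _
        rcases le_or_gt 1 (e j) with h | h
        · rw [fOrd_eq h]
        · linarith [fOrd_lt (hpos j) h]
      · exact ⟨j0, Finset.mem_univ j0, by linarith [fOrd_lt (hpos j0) hj0]⟩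
    linarith
end

section
/- The function g(x) = ((1+x)/x²) log(1+x) − 1/x is convex and strictly decreasing on (0,∞), with g(x) → 1/2 as x → 0⁺ and g(x) → 0 as x → ∞. Consequently, for every integer p ≥ 3 there exists a unique x > 0 such that g(x) = 1/p. -/
open Filter Topology

/-- g(x) = ((1+x)/x²) log(1+x) − 1/x. -/
noncomputable def gFun (x : ℝ) : ℝ := (1 + x) / x ^ 2 * Real.log (1 + x) - 1 / x

noncomputable def gd (x : ℝ) : ℝ := (2*x - (x+2)*Real.log (1+x))/x^3

noncomputable def gdd (x : ℝ) : ℝ :=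
  ((2*x+6)*Real.log (1+x) - (5*x^2+6*x)/(1+x))/x^4

lemma hasDerivAt_log1p {x : ℝ} (hx : -1 < x) :
    HasDerivAt (fun y : ℝ => Real.log (1+y)) (1/(1+x)) x := by
  have h := (((hasDerivAt_id x).const_add 1)).log (by linarith : (1:ℝ)+x ≠ 0)
  simpa using h

lemma hasDerivAt_gFun {x : ℝ} (hx : 0 < x) : HasDerivAt gFun (gd x) x := by
  have hx0 : x ≠ 0 := hx.ne'
  have h1 : (1:ℝ)+x ≠ 0 := by positivity
  have hl := hasDerivAt_log1p (by linarith : (-1:ℝ) < x)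
  have hsq : HasDerivAt (fun y : ℝ => y^2) ((2:ℕ)*x^1) x := hasDerivAt_pow 2 x
  have hf : HasDerivAt (fun y : ℝ => (1+y)/y^2)
      ((1*x^2 - (1+x)*((2:ℕ)*x^1))/(x^2)^2) x :=
    (((hasDerivAt_id x).const_add 1)).div hsq (by positivity)
  have hinv : HasDerivAt (fun y : ℝ => 1/y) ((0*x - 1*1)/x^2) x :=
    (hasDerivAt_const x 1).div (hasDerivAt_id x) hx0
  have h := (hf.mul hl).sub hinv
  refine h.congr_deriv ?_
  unfold gd
  generalize Real.log (1+x) = L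
  push_cast
  field_simp
  ring

lemma hasDerivAt_gd {x : ℝ} (hx : 0 < x) : HasDerivAt gd (gdd x) x := by
  have hx0 : x ≠ 0 := hx.ne'
  have h1 : (1:ℝ)+x ≠ 0 := by positivity
  have hl := hasDerivAt_log1p (by linarith : (-1:ℝ) < x)
  have hnum : HasDerivAt (fun y : ℝ => 2*y - (y+2)*Real.log (1+y))
      (2*1 - (1*Real.log (1+x) + (x+2)*(1/(1+x)))) x :=
    ((hasDerivAt_id x).const_mul 2).sub
      ((((hasDerivAt_id x).add_const 2)).mul hl)
  have hcube : HasDerivAt (fun y : ℝ => y^3) ((3:ℕ)*x^2) x := hasDerivAt_pow 3 x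
  have h := hnum.div hcube (by positivity : x^3 ≠ 0)
  refine h.congr_deriv ?_
  unfold gdd
  generalize Real.log (1+x) = L
  push_cast
  field_simp
  ring

lemma log1p_gt {x : ℝ} (hx : 0 < x) : x/(1+x) < Real.log (1+x) := by
  have h1 : (0:ℝ) < 1+x := by linarith
  have h := Real.log_lt_sub_one_of_pos (x := 1/(1+x)) (by positivity)
    (by
      intro h
      have : (1:ℝ)+x = 1 := by
        field_simp at h
        linarith
      linarith)
  rw [one_div, Real.log_inv] at h
  have : 1/(1+x) - 1 = -(x/(1+x)) := by field_simp; ring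
  rw [one_div] at this
  rw [this] at h
  linarith

lemma contOn_log1p {s : Set ℝ} (hs : ∀ x ∈ s, (0:ℝ) < 1 + x) :
    ContinuousOn (fun y : ℝ => Real.log (1+y)) s := fun y hy =>
  ((Real.continuousAt_log (hs y hy).ne').comp (by fun_prop)).continuousWithinAt

lemma ineqB {x : ℝ} (hx : 0 < x) : 2*x < (x+2)*Real.log (1+x) := by
  set q : ℝ → ℝ := fun y => (y+2)*Real.log (1+y) - 2*y with hq
  have hmono : StrictMonoOn q (Set.Ici 0) := by
    apply strictMonoOn_of_hasDerivWithinAt_pos (convex_Ici 0)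
      (f' := fun y => (1*Real.log (1+y) + (y+2)*(1/(1+y))) - 2*1)
    · exact (ContinuousOn.mul (by fun_prop) (contOn_log1p (by intro y hy; simp at hy; linarith))).sub (by fun_prop)
    · intro y hy
      rw [interior_Ici] at hy
      have hy' : (0:ℝ) < y := hy
      exact ((((hasDerivAt_id y).add_const 2).mul (hasDerivAt_log1p (by linarith))).sub
        ((hasDerivAt_id y).const_mul 2)).hasDerivWithinAt
    · intro y hy
      rw [interior_Ici] at hy
      have hy' : (0:ℝ) < y := hy
      have h1 : (0:ℝ) < 1+y := by linarith
      have hlog := log1p_gt hy'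
      have he : (y+2)*(1/(1+y)) = 1 + 1/(1+y) := by field_simp; ring
      have h2 : y/(1+y) = 1 - 1/(1+y) := by field_simp; ring
      rw [h2] at hlog
      nlinarith [hlog]
  have := hmono (Set.self_mem_Ici) (Set.mem_Ici.2 hx.le) hx
  simp [hq] at this
  linarith

lemma ineqC {x : ℝ} (hx : 0 ≤ x) : (3*x^2+2*x)/(1+x)^2 ≤ 2*Real.log (1+x) := by
  set h1f : ℝ → ℝ := fun y => 2*Real.log (1+y) - (3*y^2+2*y)/(1+y)^2 with hh
  have hmono : MonotoneOn h1f (Set.Ici 0) := by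
    apply monotoneOn_of_hasDerivWithinAt_nonneg (convex_Ici 0)
      (f' := fun y => 2*y^2/(1+y)^3)
    · exact ((contOn_log1p (by intro y hy; simp at hy; linarith)).const_smul 2 |>.congr (by intro y hy; simp [smul_eq_mul])).sub
        (ContinuousOn.div (by fun_prop) (by fun_prop)
          (by intro y hy; simp at hy; positivity))
    · intro y hy
      rw [interior_Ici] at hy
      have hy' : (0:ℝ) < y := hy
      have h1 : (0:ℝ) < 1+y := by linarith
      have hlog := hasDerivAt_log1p (by linarith : (-1:ℝ) < y)
      have hq : HasDerivAt (fun z : ℝ => (3*z^2+2*z)/(1+z)^2)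
          (((3*(2*y)+2*1)*(1+y)^2 - (3*y^2+2*y)*((2:ℕ)*(1+y)^1*1))/((1+y)^2)^2) y := by
        have ha : HasDerivAt (fun z : ℝ => 3*z^2+2*z) (3*(2*y)+2*1) y := by
          have := ((hasDerivAt_pow 2 y).const_mul 3).add ((hasDerivAt_id y).const_mul 2)
          refine this.congr_deriv ?_
          push_cast; ring
        have hb : HasDerivAt (fun z : ℝ => (1+z)^2) ((2:ℕ)*(1+y)^1*1) y := by
          have := HasDerivAt.fun_pow ((hasDerivAt_id y).const_add 1) 2
          simpa using this
        exact ha.div hb (by positivity)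
      have := (hlog.const_mul 2).sub hq
      apply HasDerivAt.hasDerivWithinAt
      refine this.congr_deriv ?_
      field_simp
      ring
    · intro y hy
      rw [interior_Ici] at hy
      have hy' : (0:ℝ) < y := hy
      positivity
  have := hmono (Set.self_mem_Ici) (Set.mem_Ici.2 hx) hx
  simp [hh] at this
  linarith

lemma ineqD {x : ℝ} (hx : 0 ≤ x) : (5*x^2+6*x)/(1+x) ≤ (2*x+6)*Real.log (1+x) := by
  set hf : ℝ → ℝ := fun y => (2*y+6)*Real.log (1+y) - (5*y^2+6*y)/(1+y) with hh
  have hmono : MonotoneOn hf (Set.Ici 0) := by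
    apply monotoneOn_of_hasDerivWithinAt_nonneg (convex_Ici 0)
      (f' := fun y => 2*Real.log (1+y) - (3*y^2+2*y)/(1+y)^2)
    · exact (ContinuousOn.mul (by fun_prop) (contOn_log1p (by intro y hy; simp at hy; linarith))).sub
        (ContinuousOn.div (by fun_prop) (by fun_prop)
          (by intro y hy; simp at hy; positivity))
    · intro y hy
      rw [interior_Ici] at hy
      have hy' : (0:ℝ) < y := hy
      have h1 : (0:ℝ) < 1+y := by linarith
      have hlog := hasDerivAt_log1p (by linarith : (-1:ℝ) < y)
      have ha : HasDerivAt (fun z : ℝ => (2*z+6)*Real.log (1+z))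
          (2*Real.log (1+y) + (2*y+6)*(1/(1+y))) y := by
        have := (((hasDerivAt_id y).const_mul 2).add_const 6).mul hlog
        simp only [id_eq] at this
        refine this.congr_deriv ?_
        ring
      have hq : HasDerivAt (fun z : ℝ => (5*z^2+6*z)/(1+z))
          (((5*(2*y)+6)*(1+y) - (5*y^2+6*y)*1)/(1+y)^2) y := by
        have hn : HasDerivAt (fun z : ℝ => 5*z^2+6*z) (5*(2*y)+6) y := by
          have := ((hasDerivAt_pow 2 y).const_mul 5).add ((hasDerivAt_id y).const_mul 6)
          refine this.congr_deriv ?_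
          push_cast; ring
        exact hn.div ((hasDerivAt_id y).const_add 1) h1.ne'
      have := ha.sub hq
      apply HasDerivAt.hasDerivWithinAt
      refine this.congr_deriv ?_
      field_simp
      ring
    · intro y hy
      rw [interior_Ici] at hy
      have hy' : (0:ℝ) < y := hy
      have := ineqC hy'.le
      linarith
  have := hmono (Set.self_mem_Ici) (Set.mem_Ici.2 hx) hx
  simp [hh] at this
  linarith

theorem stmt11 :
    ConvexOn ℝ (Set.Ioi (0 : ℝ)) gFun ∧
    StrictAntiOn gFun (Set.Ioi (0 : ℝ)) ∧
    Tendsto gFun (𝓝[>] (0 : ℝ)) (𝓝 (1 / 2)) ∧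
    Tendsto gFun atTop (𝓝 0) ∧
    ∀ p : ℕ, 3 ≤ p → ∃! x : ℝ, 0 < x ∧ gFun x = 1 / p := by
  have hcont : ContinuousOn gFun (Set.Ioi 0) := fun x hx =>
    (hasDerivAt_gFun (Set.mem_Ioi.1 hx)).continuousAt.continuousWithinAt
  -- convexity
  have hconv : ConvexOn ℝ (Set.Ioi (0:ℝ)) gFun := by
    apply convexOn_of_deriv2_nonneg (convex_Ioi 0) hcont
    · rw [interior_Ioi]
      exact fun x hx => (hasDerivAt_gFun (Set.mem_Ioi.1 hx)).differentiableAt.differentiableWithinAt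
    · rw [interior_Ioi]
      intro x hx
      have hx' : (0:ℝ) < x := hx
      have hev : deriv gFun =ᶠ[𝓝 x] gd := by
        filter_upwards [Ioi_mem_nhds hx'] with y hy
        exact (hasDerivAt_gFun (Set.mem_Ioi.1 hy)).deriv
      exact (hev.differentiableAt_iff.2 (hasDerivAt_gd hx').differentiableAt).differentiableWithinAt
    · rw [interior_Ioi]
      intro x hx
      have hx' : (0:ℝ) < x := hx
      have hev : deriv gFun =ᶠ[𝓝 x] gd := by
        filter_upwards [Ioi_mem_nhds hx'] with y hy
        exact (hasDerivAt_gFun (Set.mem_Ioi.1 hy)).deriv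
      have h2 : deriv^[2] gFun x = gdd x := by
        simp only [Function.iterate_succ, Function.iterate_zero, Function.comp_apply, id_eq]
        rw [hev.deriv_eq]
        exact (hasDerivAt_gd hx').deriv
      rw [h2]
      unfold gdd
      apply div_nonneg _ (by positivity)
      have := ineqD hx'.le
      linarith
  -- strict antitone
  have hanti : StrictAntiOn gFun (Set.Ioi (0:ℝ)) := by
    apply strictAntiOn_of_deriv_neg (convex_Ioi 0) hcont
    rw [interior_Ioi]
    intro x hx
    have hx' : (0:ℝ) < x := hx
    rw [(hasDerivAt_gFun hx').deriv]
    unfold gd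
    apply div_neg_of_neg_of_pos _ (by positivity)
    have := ineqB hx'
    linarith
  -- limit at 0+
  have hlim0 : Tendsto gFun (𝓝[>] (0:ℝ)) (𝓝 (1/2)) := by
    have hb : Tendsto (fun x : ℝ => x/2 + (1+x)*x/(1-x)) (𝓝[>] (0:ℝ)) (𝓝 0) := by
      have : ContinuousAt (fun x : ℝ => x/2 + (1+x)*x/(1-x)) 0 := by
        apply ContinuousAt.add (by fun_prop)
        exact ContinuousAt.div (by fun_prop) (by fun_prop) (by norm_num)
      have ht := this.tendsto.mono_left (nhdsWithin_le_nhds (s := Set.Ioi (0:ℝ)))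
      simpa using ht
    have key : Tendsto (fun x => gFun x - 1/2) (𝓝[>] (0:ℝ)) (𝓝 0) := by
      apply squeeze_zero_norm' _ hb
      filter_upwards [Ioo_mem_nhdsGT_of_mem (by norm_num : (0:ℝ) ∈ Set.Ico 0 (1/2))]
        with x hx
      obtain ⟨hx0, hx1⟩ := hx
      have hx1' : x < 1 := by linarith
      have habs : |x| < 1 := by rw [abs_of_pos hx0]; exact hx1'
      have hE := Real.abs_log_sub_add_sum_range_le (x := -x) (by rwa [abs_neg]) 2
      rw [abs_neg] at hE
      simp [Finset.sum_range_succ] at hE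
      -- hE : |(-x + x^2/2) + log(1+x)| ≤ |x|^3/(1-|x|)
      rw [abs_of_pos hx0] at hE
      set L := Real.log (1+x) with hL
      set E := L - (x - x^2/2) with hEdef
      have hEbound : |E| ≤ x^3/(1-x) := by
        have he1 : E = -x + x^2/2 + L := by rw [hEdef]; ring
        have he2 : -x + x^2/2 + L = -x + x^2/(1+1) + L := by norm_num
        rw [he1, he2]
        exact hE
      have hgx : gFun x - 1/2 = (1+x)*E/x^2 - x/2 := by
        rw [hEdef]
        unfold gFun
        rw [← hL]
        field_simp
        ring
      rw [hgx, Real.norm_eq_abs]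
      have h1 : |(1+x)*E/x^2 - x/2| ≤ |(1+x)*E/x^2| + |x/2| := abs_sub _ _
      have h2 : |(1+x)*E/x^2| = (1+x)*|E|/x^2 := by
        rw [abs_div, abs_mul, abs_of_pos (by linarith : (0:ℝ) < 1+x),
          abs_of_pos (by positivity : (0:ℝ) < x^2)]
      have h3 : (1+x)*|E|/x^2 ≤ (1+x)*(x^3/(1-x))/x^2 := by
        apply div_le_div_of_nonneg_right _ (by positivity)
        exact mul_le_mul_of_nonneg_left hEbound (by linarith)
      have h4 : (1+x)*(x^3/(1-x))/x^2 = (1+x)*x/(1-x) := by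
        have hne : (1:ℝ)-x ≠ 0 := by linarith
        have hxne : x ≠ 0 := hx0.ne'
        field_simp
      rw [abs_of_pos (by positivity : (0:ℝ) < x/2)] at h1
      calc |(1+x)*E/x^2 - x/2| ≤ |(1+x)*E/x^2| + x/2 := h1
        _ ≤ (1+x)*x/(1-x) + x/2 := by rw [h2]; rw [h4] at h3; linarith
        _ = x/2 + (1+x)*x/(1-x) := by ring
    have := key.add (tendsto_const_nhds (x := (1/2 : ℝ)))
    simpa using this
  -- limit at infinity
  have hlimtop : Tendsto gFun atTop (𝓝 0) := by
    have h1 : Tendsto (fun x : ℝ => Real.log (1+x)/(1+x)) atTop (𝓝 0) := by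
      have := Real.isLittleO_log_id_atTop.comp_tendsto
        (tendsto_atTop_add_const_left atTop 1 tendsto_id)
      simpa [Function.comp] using this.tendsto_div_nhds_zero
    have h2 : Tendsto (fun x : ℝ => (1+x)/x) atTop (𝓝 1) := by
      have := (tendsto_inv_atTop_zero (𝕜 := ℝ)).add (tendsto_const_nhds (x := (1:ℝ)))
      rw [zero_add] at this
      apply this.congr'
      filter_upwards [eventually_gt_atTop (0:ℝ)] with x hx
      field_simp
    have h3 : Tendsto (fun x : ℝ => 1/x) atTop (𝓝 0) := by
      simpa [one_div] using (tendsto_inv_atTop_zero (𝕜 := ℝ))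
    have := ((h1.mul (h2.mul h2)).sub h3)
    rw [show (0:ℝ)*(1*1) - 0 = 0 by ring] at this
    apply this.congr'
    filter_upwards [eventually_gt_atTop (0:ℝ)] with x hx
    have h1x : (0:ℝ) < 1+x := by linarith
    unfold gFun
    field_simp
  refine ⟨hconv, hanti, hlim0, hlimtop, ?_⟩
  intro p hp
  have hp0 : (0:ℝ) < p := by positivity
  have hc0 : (0:ℝ) < 1/p := by positivity
  have hclt : (1:ℝ)/p < 1/2 := by
    have h3 : (3:ℝ) ≤ p := by exact_mod_cast hp
    have : (1:ℝ)/p ≤ 1/3 := by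
      apply one_div_le_one_div_of_le <;> linarith
    linarith
  -- existence of a with gFun a > 1/p
  obtain ⟨a, ha1, ha2⟩ : ∃ a : ℝ, 1/(p:ℝ) < gFun a ∧ 0 < a := by
    have hev : ∀ᶠ x in 𝓝[>] (0:ℝ), 1/(p:ℝ) < gFun x :=
      hlim0.eventually_const_lt hclt
    have hev2 : ∀ᶠ x in 𝓝[>] (0:ℝ), 0 < x := eventually_mem_nhdsWithin
    exact (hev.and hev2).exists
  obtain ⟨b, hb1, hb2⟩ : ∃ b : ℝ, gFun b < 1/(p:ℝ) ∧ a < b := by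
    have hev : ∀ᶠ x in atTop, gFun x < 1/(p:ℝ) :=
      hlimtop.eventually_lt_const hc0
    exact (hev.and (eventually_gt_atTop a)).exists
  have hIcc : Set.Icc a b ⊆ Set.Ioi (0:ℝ) := fun y hy => lt_of_lt_of_le ha2 hy.1
  have hivt := intermediate_value_Icc' hb2.le (hcont.mono hIcc)
  have hmem : (1:ℝ)/p ∈ Set.Icc (gFun b) (gFun a) := ⟨hb1.le, ha1.le⟩
  obtain ⟨x, hx, hgx⟩ := hivt hmem
  refine ⟨x, ⟨lt_of_lt_of_le ha2 hx.1, hgx⟩, ?_⟩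
  rintro y ⟨hy0, hgy⟩
  exact hanti.injOn (Set.mem_Ioi.2 hy0) (hIcc hx) (hgy.trans hgx.symm)
end

section
/- Let p ≥ 4 be an even integer and let x > 0 be the unique positive solution of 1/p = ((1+x)/x²) log(1+x) − 1/x. Define, for c ∈ [0,1], D(c) = x c^{p−1} − log(1 + x c^{p−1}) − ((p−1)/p)(x²/(1+x)) c^p. Then D(0) = 0, D(1) = 0, and D(c) < 0 for every c ∈ (0,1). -/
open Real Set

private lemma aux_log (y : ℝ) (hy : 0 < y) : 2*y/(2+y) < Real.log (1+y) := by
  have key : StrictMonoOn (fun t : ℝ => Real.log (1+t) - 2*t/(2+t)) (Ici 0) := by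
    have hder : ∀ t : ℝ, 0 ≤ t → HasDerivAt (fun t : ℝ => Real.log (1+t) - 2*t/(2+t))
        (t^2/((1+t)*(2+t)^2)) t := by
      intro t ht
      have h1 : (1:ℝ) + t ≠ 0 := by linarith
      have h2 : (2:ℝ) + t ≠ 0 := by linarith
      have d1 : HasDerivAt (fun t : ℝ => 1 + t) 1 t := by
        simpa using (hasDerivAt_id t).const_add 1
      have d2 : HasDerivAt (fun t : ℝ => Real.log (1+t)) (1/(1+t)) t := by
        simpa using d1.log h1
      have d3 : HasDerivAt (fun t : ℝ => 2*t) 2 t := by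
        simpa using (hasDerivAt_id t).const_mul 2
      have d4 : HasDerivAt (fun t : ℝ => 2 + t) 1 t := by
        simpa using (hasDerivAt_id t).const_add 2
      have d5 : HasDerivAt (fun t : ℝ => 2*t/(2+t)) ((2*(2+t) - 2*t*1)/(2+t)^2) t :=
        d3.div d4 h2
      have := d2.sub d5
      refine this.congr_deriv ?_
      field_simp
      ring
    apply strictMonoOn_of_deriv_pos (convex_Ici 0)
    · exact fun t ht => ((hder t ht).continuousAt).continuousWithinAt
    · intro t ht
      rw [interior_Ici] at ht
      rw [(hder t ht.le).deriv]
      have ht' : (0:ℝ) < t := ht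
      have : (0:ℝ) < (1+t)*(2+t)^2 := by positivity
      exact div_pos (by positivity) this
  have h := key self_mem_Ici (mem_Ici.2 hy.le) hy
  simp only [Real.log_one] at h
  norm_num at h
  linarith

private lemma xlarge (p : ℕ) (hp : 4 ≤ p) (x : ℝ) (hx : 0 < x)
    (hxeq : 1 / (p : ℝ) = (1 + x) / x ^ 2 * Real.log (1 + x) - 1 / x) :
    (p:ℝ) - 2 < x := by
  set P : ℝ := (p : ℝ) with hPdef
  have hP4 : (4:ℝ) ≤ P := by rw [hPdef]; exact_mod_cast hp
  have hP0 : (0:ℝ) < P := by linarith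
  have h1x : (0:ℝ) < 1 + x := by linarith
  set G : ℝ → ℝ := fun y => P*(1+y)*Real.log (1+y) - P*y - y^2 with hGdef
  -- G x = 0
  have hGx : G x = 0 := by
    have hxne : x ≠ 0 := ne_of_gt hx
    have hPne : P ≠ 0 := ne_of_gt hP0
    simp only [hGdef]
    field_simp at hxeq ⊢
    nlinarith [hxeq]
  -- derivative of G
  have hder : ∀ y : ℝ, 0 ≤ y → HasDerivAt G (P*Real.log (1+y) - 2*y) y := by
    intro y hy
    have h1 : (1:ℝ) + y ≠ 0 := by linarith
    have d1 : HasDerivAt (fun y : ℝ => 1 + y) 1 y := by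
      simpa using (hasDerivAt_id y).const_add 1
    have d2 : HasDerivAt (fun y : ℝ => Real.log (1+y)) (1/(1+y)) y := by
      simpa using d1.log h1
    have d3 : HasDerivAt (fun y : ℝ => P*(1+y)) P y := by
      simpa using d1.const_mul P
    have d4 : HasDerivAt (fun y : ℝ => P*(1+y)*Real.log (1+y))
        (P*Real.log (1+y) + (P*(1+y))*(1/(1+y))) y := d3.mul d2
    have d5 : HasDerivAt (fun y : ℝ => P*y) P y := by
      simpa using (hasDerivAt_id y).const_mul P
    have d6 : HasDerivAt (fun y : ℝ => y^2) (2*y) y := by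
      simpa using hasDerivAt_pow 2 y
    have := (d4.sub d5).sub d6
    refine this.congr_deriv ?_
    field_simp
    ring
  -- G strictly increasing on [0, P-2]
  have hmono : StrictMonoOn G (Icc 0 (P-2)) := by
    apply strictMonoOn_of_deriv_pos (convex_Icc 0 (P-2))
    · exact fun t ht => ((hder t ht.1).continuousAt).continuousWithinAt
    · intro t ht
      rw [interior_Icc] at ht
      rw [(hder t ht.1.le).deriv]
      have hl := aux_log t ht.1
      have htp : (0:ℝ) < t := ht.1
      have h2t : (0:ℝ) < 2 + t := by linarith
      have hq : (0:ℝ) ≤ 2*t/(2+t) := div_nonneg (by linarith) (by linarith)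
      have hle : 2 + t ≤ P := by linarith [ht.2]
      have step1 : 2*t = (2*t/(2+t))*(2+t) := by field_simp
      have step2 : (2*t/(2+t))*(2+t) ≤ (2*t/(2+t))*P :=
        mul_le_mul_of_nonneg_left hle hq
      have step3 : (2*t/(2+t))*P < Real.log (1+t) * P :=
        mul_lt_mul_of_pos_right hl hP0
      nlinarith [step1, step2, step3]
  by_contra hcon
  push_neg at hcon
  have hmem0 : (0:ℝ) ∈ Icc (0:ℝ) (P-2) := ⟨le_rfl, by linarith⟩
  have hmemx : x ∈ Icc (0:ℝ) (P-2) := ⟨hx.le, hcon⟩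
  have h2 := hmono hmem0 hmemx hx
  simp only [hGdef] at h2 hGx
  simp only [add_zero, Real.log_one] at h2
  norm_num at h2
  linarith [hGx, h2]

theorem stmt12 (p : ℕ) (hp : 4 ≤ p) (hpe : Even p) (x : ℝ) (hx : 0 < x)
    (hxeq : 1 / (p : ℝ) = (1 + x) / x ^ 2 * Real.log (1 + x) - 1 / x)
    (D : ℝ → ℝ)
    (hD : ∀ c, D c = x * c ^ (p - 1) - Real.log (1 + x * c ^ (p - 1))
      - ((p : ℝ) - 1) / p * (x ^ 2 / (1 + x)) * c ^ p) :
    D 0 = 0 ∧ D 1 = 0 ∧ ∀ c ∈ Set.Ioo (0 : ℝ) 1, D c < 0 := by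
  have hxl' := xlarge p hp x hx hxeq
  obtain ⟨j, rfl⟩ : ∃ j, p = j + 3 := ⟨p - 3, by omega⟩
  simp only [show j + 3 - 1 = j + 2 from rfl] at hD
  have hxne : x ≠ 0 := ne_of_gt hx
  have h1x : (0:ℝ) < 1 + x := by linarith
  have h1xne : (1:ℝ) + x ≠ 0 := ne_of_gt h1x
  set R : ℝ := (j : ℝ) with hRdef
  have hR0 : (0:ℝ) ≤ R := Nat.cast_nonneg j
  have hPcast : ((j + 3 : ℕ) : ℝ) = R + 3 := by push_cast; ring
  have hPne : ((j + 3 : ℕ) : ℝ) ≠ 0 := by rw [hPcast]; linarith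
  have hxl : R + 1 < x := by rw [hPcast] at hxl'; linarith
  -- log identity
  have hL : Real.log (1 + x) = (1/(R+3) + 1/x) * (x^2/(1+x)) := by
    have h1 : (1 + x) / x ^ 2 * Real.log (1 + x) = 1/(R+3) + 1/x := by
      rw [← hPcast]; linarith [hxeq]
    rw [← h1]; field_simp
  -- positivity of 1 + x d^(j+2)
  have hu : ∀ d : ℝ, 0 ≤ d → 0 < 1 + x * d^(j+2) := by
    intro d hd
    have := mul_nonneg hx.le (pow_nonneg hd (j+2))
    linarith
  -- h function
  set h : ℝ → ℝ := fun d => (1+x)*d^(j+1) - 1 - x*d^(j+2) with hhdef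
  have hone : h 1 = 0 := by simp [hhdef]
  set cstar : ℝ := ((R+1)*(1+x))/((R+2)*x) with hcdef
  have hden : (0:ℝ) < (R+2)*x := by positivity
  have hcpos : 0 < cstar := by
    apply div_pos _ hden
    positivity
  have hclt1 : cstar < 1 := by
    rw [hcdef, div_lt_one hden]
    nlinarith [hxl]
  -- derivative of h
  have hderh : ∀ d : ℝ, HasDerivAt h (d^j * ((R+1)*(1+x) - (R+2)*x*d)) d := by
    intro d
    have d1 : HasDerivAt (fun c : ℝ => (1+x)*c^(j+1)) ((1+x)*((j+1)*d^j)) d := by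
      exact_mod_cast (hasDerivAt_pow (j+1) d).const_mul (1+x)
    have d2 : HasDerivAt (fun c : ℝ => x*c^(j+2)) (x*((j+2)*d^(j+1))) d := by
      exact_mod_cast (hasDerivAt_pow (j+2) d).const_mul x
    have := (d1.sub_const 1).sub d2
    refine this.congr_deriv ?_
    ring
  have hcontsub : ∀ s : Set ℝ, ContinuousOn h s :=
    fun s => fun d _ => (hderh d).continuousAt.continuousWithinAt
  -- monotonicity of h
  have hmonoh : StrictMonoOn h (Icc 0 cstar) := by
    apply strictMonoOn_of_deriv_pos (convex_Icc 0 cstar) (hcontsub _)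
    intro d hd
    rw [interior_Icc] at hd
    rw [(hderh d).deriv]
    apply mul_pos (pow_pos hd.1 j)
    have : (R+2)*x*d < (R+2)*x*cstar := mul_lt_mul_of_pos_left hd.2 hden
    rw [hcdef, mul_div_cancel₀ _ (ne_of_gt hden)] at this
    linarith
  have hantih : StrictAntiOn h (Icc cstar 1) := by
    apply strictAntiOn_of_deriv_neg (convex_Icc cstar 1) (hcontsub _)
    intro d hd
    rw [interior_Icc] at hd
    rw [(hderh d).deriv]
    have hd0 : 0 < d := lt_trans hcpos hd.1
    apply mul_neg_of_pos_of_neg (pow_pos hd0 j)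
    have : (R+2)*x*cstar < (R+2)*x*d := mul_lt_mul_of_pos_left hd.1 hden
    rw [hcdef, mul_div_cancel₀ _ (ne_of_gt hden)] at this
    linarith
  -- derivative of D
  have hDfun : D = fun c => x * c ^ (j + 2) - Real.log (1 + x * c ^ (j + 2))
      - (((j+3:ℕ) : ℝ) - 1) / ((j+3:ℕ):ℝ) * (x ^ 2 / (1 + x)) * c ^ (j+3) := funext hD
  subst hDfun
  have hderD : ∀ d : ℝ, 0 ≤ d → HasDerivAt (fun c => x * c ^ (j + 2) - Real.log (1 + x * c ^ (j + 2))
      - (((j+3:ℕ) : ℝ) - 1) / ((j+3:ℕ):ℝ) * (x ^ 2 / (1 + x)) * c ^ (j+3))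
      ((R+2)*x^2*d^(j+2) / ((1 + x*d^(j+2))*(1+x)) * h d) d := by
    intro d hd
    have d2 : HasDerivAt (fun c : ℝ => x*c^(j+2)) (x*((j+2)*d^(j+1))) d := by
      exact_mod_cast (hasDerivAt_pow (j+2) d).const_mul x
    have d3 : HasDerivAt (fun c : ℝ => 1 + x*c^(j+2)) (x*((j+2)*d^(j+1))) d := d2.const_add 1
    have d4 : HasDerivAt (fun c : ℝ => Real.log (1 + x*c^(j+2)))
        ((x*((j+2)*d^(j+1)))/(1 + x*d^(j+2))) d := d3.log (ne_of_gt (hu d hd))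
    have d5 : HasDerivAt (fun c : ℝ => (((j+3:ℕ) : ℝ) - 1) / ((j+3:ℕ):ℝ) * (x ^ 2 / (1 + x)) * c ^ (j+3))
        ((((j+3:ℕ) : ℝ) - 1) / ((j+3:ℕ):ℝ) * (x ^ 2 / (1 + x)) * ((j+3)*d^(j+2))) d := by
      exact_mod_cast (hasDerivAt_pow (j+3) d).const_mul _
    have := (d2.sub d4).sub d5
    refine this.congr_deriv ?_
    have hune : (1 + x*d^(j+2)) ≠ 0 := ne_of_gt (hu d hd)
    rw [hhdef, hPcast]
    field_simp
    ring
  have hDcont : ∀ s : Set ℝ, s ⊆ Ici 0 → ContinuousOn (fun c => x * c ^ (j + 2) - Real.log (1 + x * c ^ (j + 2))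
      - (((j+3:ℕ) : ℝ) - 1) / ((j+3:ℕ):ℝ) * (x ^ 2 / (1 + x)) * c ^ (j+3)) s :=
    fun s hs d hd => (hderD d (hs hd)).continuousAt.continuousWithinAt
  -- values at 0 and 1
  have hD0 : (fun c => x * c ^ (j + 2) - Real.log (1 + x * c ^ (j + 2))
      - (((j+3:ℕ) : ℝ) - 1) / ((j+3:ℕ):ℝ) * (x ^ 2 / (1 + x)) * c ^ (j+3)) 0 = 0 := by
    simp
  have hD1 : (fun c => x * c ^ (j + 2) - Real.log (1 + x * c ^ (j + 2))
      - (((j+3:ℕ) : ℝ) - 1) / ((j+3:ℕ):ℝ) * (x ^ 2 / (1 + x)) * c ^ (j+3)) 1 = 0 := by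
    simp only [one_pow, mul_one, hPcast]
    rw [hL]
    have hR3 : (R:ℝ) + 3 ≠ 0 := by linarith
    field_simp
    ring
  refine ⟨hD0, hD1, ?_⟩
  rintro c ⟨hc0, hc1⟩
  by_cases hhc : 0 < h c
  · -- D strictly increasing on [c,1]
    have hmono : StrictMonoOn (fun c => x * c ^ (j + 2) - Real.log (1 + x * c ^ (j + 2))
        - (((j+3:ℕ) : ℝ) - 1) / ((j+3:ℕ):ℝ) * (x ^ 2 / (1 + x)) * c ^ (j+3)) (Icc c 1) := by
      apply strictMonoOn_of_deriv_pos (convex_Icc c 1)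
        (hDcont _ (fun d hd => le_trans hc0.le hd.1))
      intro d hd
      rw [interior_Icc] at hd
      have hd0 : 0 < d := lt_trans hc0 hd.1
      rw [(hderD d hd0.le).deriv]
      have hhd : 0 < h d := by
        rcases le_or_gt d cstar with hcase | hcase
        · have := hmonoh ⟨hc0.le, le_trans hd.1.le hcase⟩ ⟨hd0.le, hcase⟩ hd.1
          linarith
        · have := hantih ⟨hcase.le, hd.2.le⟩ ⟨hclt1.le, le_rfl⟩ hd.2
          rw [hone] at this
          linarith
      apply mul_pos _ hhd
      apply div_pos
      · positivity
      · exact mul_pos (hu d hd0.le) h1x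
    have := hmono ⟨le_rfl, hc1.le⟩ ⟨hc1.le, le_rfl⟩ hc1
    rw [hD1] at this
    exact this
  · push_neg at hhc
    have hccs : c ≤ cstar := by
      by_contra hlt
      push_neg at hlt
      have := hantih ⟨hlt.le, hc1.le⟩ ⟨hclt1.le, le_rfl⟩ hc1
      rw [hone] at this
      linarith
    have hanti : StrictAntiOn (fun c => x * c ^ (j + 2) - Real.log (1 + x * c ^ (j + 2))
        - (((j+3:ℕ) : ℝ) - 1) / ((j+3:ℕ):ℝ) * (x ^ 2 / (1 + x)) * c ^ (j+3)) (Icc 0 c) := by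
      apply strictAntiOn_of_deriv_neg (convex_Icc 0 c)
        (hDcont _ (fun d hd => hd.1))
      intro d hd
      rw [interior_Icc] at hd
      have hd0 : 0 < d := hd.1
      rw [(hderD d hd.1.le).deriv]
      have hhd : h d < 0 := by
        have := hmonoh ⟨hd.1.le, le_trans hd.2.le hccs⟩ ⟨hc0.le, hccs⟩ hd.2
        linarith
      apply mul_neg_of_pos_of_neg _ hhd
      apply div_pos
      · positivity
      · exact mul_pos (hu d hd.1.le) h1x
    have := hanti ⟨le_rfl, hc0.le⟩ ⟨hc0.le, le_rfl⟩ hc0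
    rw [hD0] at this
    exact this
end

section
/- Let p ≥ 4 be an even integer, ξ(q) = q^p/p, so ξ'(q) = q^{p−1} and ξ''(q) = (p−1)q^{p−2}. Suppose β > 0, m ∈ (0,1] and q ∈ (0,1) satisfy the critical point equations β² ξ'(q) = m^{-1}(1/(1−q) − 1/(1−q+mq)) and β² ξ(q) = m^{-2} log((1−q+qm)/(1−q)) − (q/m)·1/(1−q+qm). Then for every u ∈ [q, 1), β²(p−1)u^{p−2} ≤ (1 − q + m(q−u))^{-2} ≤ (1−u)^{-2}; in particular β² ξ''(u) (1−u)² ≤ 1 for all u ∈ [q,1). -/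
private lemma mono_le_aux {f f' : ℝ → ℝ} {s t : ℝ} (hst : s ≤ t)
    (hd : ∀ x ∈ Set.Icc s t, HasDerivAt f (f' x) x)
    (h0 : ∀ x ∈ Set.Ioo s t, 0 ≤ f' x) : f s ≤ f t := by
  rcases eq_or_lt_of_le hst with rfl | h
  · exact le_refl _
  have hmono : MonotoneOn f (Set.Icc s t) := by
    apply monotoneOn_of_deriv_nonneg (convex_Icc s t)
    · exact fun x hx => (hd x hx).differentiableAt.continuousAt.continuousWithinAt
    · intro x hx
      rw [interior_Icc] at hx
      exact (hd x (Set.Ioo_subset_Icc_self hx)).differentiableAt.differentiableWithinAt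
    · intro x hx
      rw [interior_Icc] at hx
      rw [(hd x (Set.Ioo_subset_Icc_self hx)).deriv]
      exact h0 x hx
  exact hmono (Set.left_mem_Icc.2 hst) (Set.right_mem_Icc.2 hst) hst

private lemma anti_le_aux {f f' : ℝ → ℝ} {s t : ℝ} (hst : s ≤ t)
    (hd : ∀ x ∈ Set.Icc s t, HasDerivAt f (f' x) x)
    (h0 : ∀ x ∈ Set.Ioo s t, f' x ≤ 0) : f t ≤ f s := by
  rcases eq_or_lt_of_le hst with rfl | h
  · exact le_refl _
  have hanti : AntitoneOn f (Set.Icc s t) := by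
    apply antitoneOn_of_deriv_nonpos (convex_Icc s t)
    · exact fun x hx => (hd x hx).differentiableAt.continuousAt.continuousWithinAt
    · intro x hx
      rw [interior_Icc] at hx
      exact (hd x (Set.Ioo_subset_Icc_self hx)).differentiableAt.differentiableWithinAt
    · intro x hx
      rw [interior_Icc] at hx
      rw [(hd x (Set.Ioo_subset_Icc_self hx)).deriv]
      exact h0 x hx
  exact hanti (Set.left_mem_Icc.2 hst) (Set.right_mem_Icc.2 hst) hst

private lemma anti_lt_aux {f f' : ℝ → ℝ} {s t : ℝ} (hst : s < t)
    (hd : ∀ x ∈ Set.Icc s t, HasDerivAt f (f' x) x)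
    (h0 : ∀ x ∈ Set.Ioo s t, f' x < 0) : f t < f s := by
  have hanti : StrictAntiOn f (Set.Icc s t) := by
    apply strictAntiOn_of_deriv_neg (convex_Icc s t)
    · exact fun x hx => (hd x hx).differentiableAt.continuousAt.continuousWithinAt
    · intro x hx
      rw [interior_Icc] at hx
      rw [(hd x (Set.Ioo_subset_Icc_self hx)).deriv]
      exact h0 x hx
  exact hanti (Set.left_mem_Icc.2 hst.le) (Set.right_mem_Icc.2 hst.le) hst

set_option maxHeartbeats 1000000 in
theorem stmt13 (p : ℕ) (hp : 4 ≤ p) (hpe : Even p) (β m q : ℝ)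
    (hβ : 0 < β) (hm : m ∈ Set.Ioc (0 : ℝ) 1) (hq : q ∈ Set.Ioo (0 : ℝ) 1)
    (hc1 : β ^ 2 * q ^ (p - 1) = m⁻¹ * (1 / (1 - q) - 1 / (1 - q + m * q)))
    (hc2 : β ^ 2 * (q ^ p / p)
      = (1 / m ^ 2) * Real.log ((1 - q + q * m) / (1 - q)) - (q / m) * (1 / (1 - q + q * m))) :
    ∀ u ∈ Set.Ico q 1,
      β ^ 2 * ((p : ℝ) - 1) * u ^ (p - 2) ≤ ((1 - q + m * (q - u)) ^ 2)⁻¹ ∧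
      ((1 - q + m * (q - u)) ^ 2)⁻¹ ≤ ((1 - u) ^ 2)⁻¹ ∧
      β ^ 2 * (((p : ℝ) - 1) * u ^ (p - 2)) * (1 - u) ^ 2 ≤ 1 := by
  obtain ⟨hm0, hm1⟩ := hm
  obtain ⟨hq0, hq1⟩ := hq
  obtain ⟨n, rfl⟩ : ∃ n, p = n + 4 := ⟨p - 4, by omega⟩
  simp only [show n + 4 - 1 = n + 3 from rfl, show n + 4 - 2 = n + 2 from rfl] at hc1 ⊢
  set a : ℝ := 1 - q + m * q with ha_def
  have ea : (1 : ℝ) - q + q * m = a := by rw [ha_def]; ring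
  rw [ea] at hc2
  have h1q : (0:ℝ) < 1 - q := by linarith
  have ha : 0 < a := by nlinarith
  have hane : a ≠ 0 := ha.ne'
  have hmne : m ≠ 0 := hm0.ne'
  have hD : ∀ u : ℝ, u < 1 → 0 < a - m * u := by
    intro u hu; nlinarith
  set C : ℝ := β ^ 2 * ((n : ℝ) + 3) with hC_def
  have hC : 0 < C := by positivity
  set F : ℝ → ℝ := fun u => C * u ^ (n + 2) * (a - m * u) ^ 2 with hF_def
  set φ : ℝ → ℝ := fun u => C * u ^ (n + 2) - ((a - m * u) ^ 2)⁻¹ with hφ_def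
  set ψ : ℝ → ℝ := fun u => β ^ 2 * u ^ (n + 3) - m⁻¹ * ((a - m * u)⁻¹ - a⁻¹) with hψ_def
  set Ψ : ℝ → ℝ := fun u => β ^ 2 * u ^ (n + 4) / ((n : ℝ) + 4)
      - (1 / m ^ 2) * (Real.log a - Real.log (a - m * u)) + u * (m * a)⁻¹ with hΨ_def
  have haq : a - m * q = 1 - q := by rw [ha_def]; ring
  -- boundary values
  have hψq : ψ q = 0 := by
    simp only [hψ_def, haq, hc1]
    field_simp
    ring
  have hψ0 : ψ 0 = 0 := by
    simp [hψ_def]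
  have hΨ0 : Ψ 0 = 0 := by
    simp [hΨ_def]
  have hΨq : Ψ q = 0 := by
    have hlog : Real.log (a / (1 - q)) = Real.log a - Real.log (1 - q) :=
      Real.log_div hane h1q.ne'
    have hcast : ((n + 4 : ℕ) : ℝ) = (n : ℝ) + 4 := by push_cast; ring
    rw [hcast] at hc2
    simp only [hΨ_def, haq, ← hlog]
    rw [show β ^ 2 * q ^ (n + 4) / ((n:ℝ) + 4) = β ^ 2 * (q ^ (n + 4) / ((n:ℝ)+4)) from by ring,
      hc2]
    have : (m*a)⁻¹ = m⁻¹ * a⁻¹ := by rw [mul_inv]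
    rw [this]
    field_simp
    ring
  -- derivatives
  have hd2 : ∀ u : ℝ, HasDerivAt (fun x : ℝ => a - m * x) (-m) u := by
    intro u
    simpa using ((hasDerivAt_id u).const_mul m).const_sub a
  have hψd : ∀ u : ℝ, u < 1 → HasDerivAt ψ (φ u) u := by
    intro u hu
    have hDu : a - m * u ≠ 0 := (hD u hu).ne'
    have d1 : HasDerivAt (fun x : ℝ => β ^ 2 * x ^ (n + 3))
        (β ^ 2 * (((n + 3 : ℕ) : ℝ) * u ^ (n + 2))) u :=
      (hasDerivAt_pow (n + 3) u).const_mul (β ^ 2)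
    have d3 : HasDerivAt (fun x : ℝ => (a - m * x)⁻¹ - a⁻¹) (-(-m) / (a - m * u) ^ 2) u :=
      ((hd2 u).inv hDu).sub_const a⁻¹
    have d4 := d3.const_mul m⁻¹
    have d5 := d1.sub d4
    simp only [hψ_def, hφ_def]
    refine d5.congr_deriv ?_
    rw [hC_def]
    push_cast
    field_simp
  have hΨd : ∀ u : ℝ, u < 1 → HasDerivAt Ψ (ψ u) u := by
    intro u hu
    have hDu : a - m * u ≠ 0 := (hD u hu).ne'
    have e1 : HasDerivAt (fun x : ℝ => β ^ 2 * x ^ (n + 4) / ((n : ℝ) + 4))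
        (β ^ 2 * (((n + 4 : ℕ) : ℝ) * u ^ (n + 3)) / ((n : ℝ) + 4)) u :=
      ((hasDerivAt_pow (n + 4) u).const_mul (β ^ 2)).div_const _
    have e2 : HasDerivAt (fun x : ℝ => Real.log (a - m * x)) (-m / (a - m * u)) u :=
      (hd2 u).log hDu
    have e3 := ((hasDerivAt_const u (Real.log a)).sub e2).const_mul (1 / m ^ 2)
    have e4 := (hasDerivAt_id u).mul_const (m * a)⁻¹
    have e5 := (e1.sub e3).add e4
    simp only [hΨ_def, hψ_def]
    refine e5.congr_deriv ?_
    have hn4 : ((n : ℝ) + 4) ≠ 0 := by positivity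
    push_cast
    field_simp
    ring
  have hFd : ∀ u : ℝ, HasDerivAt F
      (C * (u ^ (n + 1) * (a - m * u) * (((n : ℝ) + 2) * a - ((n : ℝ) + 4) * (m * u)))) u := by
    intro u
    have dsq := (hd2 u).pow 2
    have dd := ((hasDerivAt_pow (n + 2) u).mul dsq).const_mul C
    have hFeq : F = fun x : ℝ => C * (x ^ (n + 2) * (a - m * x) ^ 2) := by
      funext x; simp only [hF_def]; ring
    rw [hFeq]
    refine dd.congr_deriv ?_
    push_cast
    simp only [Pi.pow_apply]
    ring
  -- link between F and φ
  have linkle : ∀ x : ℝ, x < 1 → F x ≤ 1 → φ x ≤ 0 := by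
    intro x hx h
    have hDx : (0:ℝ) < (a - m * x) ^ 2 := pow_pos (hD x hx) 2
    simp only [hF_def] at h
    simp only [hφ_def]
    have h2 : C * x ^ (n + 2) ≤ 1 / (a - m * x) ^ 2 := (le_div_iff₀ hDx).2 h
    rw [one_div] at h2
    linarith
  have linklt : ∀ x : ℝ, x < 1 → F x < 1 → φ x < 0 := by
    intro x hx h
    have hDx : (0:ℝ) < (a - m * x) ^ 2 := pow_pos (hD x hx) 2
    simp only [hF_def] at h
    simp only [hφ_def]
    have h2 : C * x ^ (n + 2) < 1 / (a - m * x) ^ 2 := (lt_div_iff₀ hDx).2 h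
    rw [one_div] at h2
    linarith
  have linkge : ∀ x : ℝ, x < 1 → 1 ≤ F x → 0 ≤ φ x := by
    intro x hx h
    have hDx : (0:ℝ) < (a - m * x) ^ 2 := pow_pos (hD x hx) 2
    simp only [hF_def] at h
    simp only [hφ_def]
    have h2 : 1 / (a - m * x) ^ 2 ≤ C * x ^ (n + 2) := (div_le_iff₀ hDx).2 h
    rw [one_div] at h2
    linarith
  -- the key inequality
  have key : ∀ u : ℝ, q ≤ u → u < 1 → F u ≤ 1 := by
    by_contra hcon
    push_neg at hcon
    obtain ⟨u₀, hqu₀, hu₀1, hFu₀⟩ := hcon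
    have hu₀0 : 0 < u₀ := lt_of_lt_of_le hq0 hqu₀
    -- unimodality-based monotone predicate
    have Pmono : ∀ s t : ℝ, 0 ≤ s → s ≤ t → t ≤ u₀ → 1 ≤ F s → 1 ≤ F t := by
      intro s t hs hst htu hFs
      rcases eq_or_lt_of_le hst with rfl | hst'
      · exact hFs
      have ht1 : t < 1 := lt_of_le_of_lt htu hu₀1
      by_cases hcase : ((n : ℝ) + 4) * (m * t) ≤ ((n : ℝ) + 2) * a
      · refine le_trans hFs (mono_le_aux hst (fun x _ => hFd x) ?_)
        intro x hx
        obtain ⟨hx1, hx2⟩ := hx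
        have hx0 : 0 < x := lt_of_le_of_lt hs hx1
        have hxlt1 : x < 1 := lt_trans hx2 ht1
        have hDx : 0 < a - m * x := hD x hxlt1
        have h5 : ((n : ℝ) + 2) * a - ((n : ℝ) + 4) * (m * x) ≥ 0 := by
          nlinarith [mul_nonneg (mul_nonneg (show (0:ℝ) ≤ (n:ℝ) + 4 by positivity) hm0.le)
            (sub_pos.2 hx2).le]
        exact mul_nonneg hC.le (mul_nonneg (mul_nonneg (pow_nonneg hx0.le _) hDx.le) h5)
      · push_neg at hcase
        have ht0 : 0 < t := by
          rcases le_or_gt t 0 with hle | h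
          · exfalso
            have h1 : m * t ≤ 0 := mul_nonpos_iff.2 (Or.inl ⟨hm0.le, hle⟩)
            have h2 : ((n : ℝ) + 4) * (m * t) ≤ 0 :=
              mul_nonpos_iff.2 (Or.inl ⟨by positivity, h1⟩)
            nlinarith [mul_pos (show (0:ℝ) < (n:ℝ) + 2 by positivity) ha]
          · exact h
        have hFanti : F u₀ ≤ F t := by
          apply anti_le_aux htu (fun x _ => hFd x)
          intro x hx
          obtain ⟨hx1, hx2⟩ := hx
          have hx0 : 0 < x := lt_trans ht0 hx1
          have hxlt1 : x < 1 := lt_trans hx2 hu₀1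
          have hDx : 0 < a - m * x := hD x hxlt1
          have h5 : ((n : ℝ) + 2) * a - ((n : ℝ) + 4) * (m * x) < 0 := by
            nlinarith [mul_nonneg (mul_nonneg (show (0:ℝ) ≤ (n:ℝ) + 4 by positivity) hm0.le)
              (sub_pos.2 hx1).le]
          exact le_of_lt (mul_neg_of_pos_of_neg hC
            (mul_neg_of_pos_of_neg (mul_pos (pow_pos hx0 _) hDx) h5))
        linarith
    -- ψ is nonpositive on [0, q]
    have hψnonpos : ∀ t : ℝ, 0 ≤ t → t ≤ q → ψ t ≤ 0 := by
      intro t ht0 htq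
      rcases eq_or_lt_of_le ht0 with rfl | ht0'
      · exact le_of_eq hψ0
      have ht1 : t < 1 := lt_of_le_of_lt htq hq1
      by_cases hcase : F t < 1
      · have : ψ t < ψ 0 := by
          apply anti_lt_aux ht0' (fun x hx => hψd x (lt_of_le_of_lt hx.2 ht1))
          intro x hx
          obtain ⟨hx1, hx2⟩ := hx
          have hxlt1 : x < 1 := lt_trans hx2 ht1
          refine linklt x hxlt1 ?_
          by_contra hge
          push_neg at hge
          exact absurd (Pmono x t (le_of_lt hx1) (le_of_lt hx2)
            (le_trans htq hqu₀) hge) (not_le.2 hcase)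
        linarith [hψ0]
      · push_neg at hcase
        have : ψ t ≤ ψ q := by
          apply mono_le_aux htq (fun x hx => hψd x (lt_of_le_of_lt hx.2 hq1))
          intro x hx
          obtain ⟨hx1, hx2⟩ := hx
          have hxlt1 : x < 1 := lt_trans hx2 hq1
          refine linkge x hxlt1 ?_
          exact Pmono t x ht0 (le_of_lt hx1) (le_trans (le_of_lt hx2) hqu₀) hcase
        linarith [hψq]
    -- a small point where F < 1, hence ψ < 0
    set t₁ : ℝ := min (q / 2) (1 / (2 * C * a ^ 2)) with ht₁_def
    have ht₁0 : 0 < t₁ := lt_min (by linarith) (by positivity)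
    have ht₁q : t₁ < q := lt_of_le_of_lt (min_le_left _ _) (by linarith)
    have hFsmall : ∀ x : ℝ, 0 < x → x ≤ t₁ → F x < 1 := by
      intro x hx0 hx1
      have hxle : x ≤ 1 / (2 * C * a ^ 2) := le_trans hx1 (min_le_right _ _)
      have hxq : x < 1 := by
        have := lt_of_le_of_lt hx1 ht₁q
        linarith
      have h1 : a - m * x ≤ a := by nlinarith
      have h2 : 0 < a - m * x := hD x hxq
      have h3 : x ^ (n + 2) ≤ x := by
        calc x ^ (n + 2) ≤ x ^ 1 := by
              apply pow_le_pow_of_le_one hx0.le (by linarith) (by omega)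
          _ = x := pow_one x
      have hfin : C * (1 / (2 * C * a ^ 2)) * a ^ 2 = 1 / 2 := by
        field_simp
      have hstep1 : F x ≤ C * x * a ^ 2 := by
        simp only [hF_def]
        have hx2 : (a - m * x) ^ 2 ≤ a ^ 2 := pow_le_pow_left₀ h2.le h1 2
        have hl : C * x ^ (n + 2) ≤ C * x := mul_le_mul_of_nonneg_left h3 hC.le
        exact mul_le_mul hl hx2 (sq_nonneg _) (by positivity)
      have hstep2 : C * x * a ^ 2 ≤ C * (1 / (2 * C * a ^ 2)) * a ^ 2 :=
        mul_le_mul_of_nonneg_right (mul_le_mul_of_nonneg_left hxle hC.le) (sq_nonneg a)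
      calc F x ≤ C * x * a ^ 2 := hstep1
        _ ≤ C * (1 / (2 * C * a ^ 2)) * a ^ 2 := hstep2
        _ = 1 / 2 := hfin
        _ < 1 := by norm_num
    have hψneg : ∀ x : ℝ, 0 < x → x ≤ t₁ → ψ x < 0 := by
      intro x hx0 hx1
      have hx1' : x < 1 := by
        have := lt_of_le_of_lt hx1 ht₁q; linarith
      have : ψ x < ψ 0 := by
        apply anti_lt_aux hx0 (fun y hy => hψd y (lt_of_le_of_lt hy.2 hx1'))
        intro y hy
        obtain ⟨hy1, hy2⟩ := hy
        exact linklt y (lt_trans hy2 hx1') (hFsmall y hy1 (le_trans hy2.le hx1))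
      linarith [hψ0]
    -- now derive the contradiction via Ψ
    have hA : Ψ t₁ < Ψ 0 := by
      apply anti_lt_aux ht₁0 (fun x hx => hΨd x (by
        have := le_trans hx.2 (le_of_lt ht₁q); linarith))
      intro x hx
      exact hψneg x hx.1 hx.2.le
    have hB : Ψ q ≤ Ψ t₁ := by
      apply anti_le_aux ht₁q.le (fun x hx => hΨd x (lt_of_le_of_lt hx.2 hq1))
      intro x hx
      exact hψnonpos x (le_trans ht₁0.le hx.1.le) hx.2.le
    linarith [hΨq, hΨ0]
  -- final assembly
  intro u hu
  obtain ⟨hqu, hu1⟩ := Set.mem_Ico.1 hu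
  have hK : C * u ^ (n + 2) * (a - m * u) ^ 2 ≤ 1 := key u hqu hu1
  have hDu : 0 < a - m * u := hD u hu1
  have h1u : (0:ℝ) < 1 - u := by linarith
  have hcmp : 1 - u ≤ a - m * u := by nlinarith
  have egoal : 1 - q + m * (q - u) = a - m * u := by rw [ha_def]; ring
  have hcast2 : ((n + 4 : ℕ) : ℝ) - 1 = (n : ℝ) + 3 := by push_cast; ring
  rw [egoal, hcast2]
  have hDu2 : (0:ℝ) < (a - m * u) ^ 2 := by positivity
  have h1u2 : (0:ℝ) < (1 - u) ^ 2 := by positivity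
  have hinv : ((a - m * u) ^ 2)⁻¹ * (a - m * u) ^ 2 = 1 := inv_mul_cancel₀ hDu2.ne'
  have hinv2 : ((1 - u) ^ 2)⁻¹ * (1 - u) ^ 2 = 1 := inv_mul_cancel₀ h1u2.ne'
  have first : C * u ^ (n + 2) ≤ ((a - m * u) ^ 2)⁻¹ := by
    have h2 : C * u ^ (n + 2) ≤ 1 / (a - m * u) ^ 2 := (le_div_iff₀ hDu2).2 hK
    rwa [one_div] at h2
  have second : ((a - m * u) ^ 2)⁻¹ ≤ ((1 - u) ^ 2)⁻¹ := by
    apply inv_anti₀ h1u2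
    nlinarith
  have third : C * u ^ (n + 2) * (1 - u) ^ 2 ≤ 1 := by
    have h2 : C * u ^ (n + 2) ≤ 1 / (1 - u) ^ 2 := by
      rw [one_div]; exact le_trans first second
    exact (le_div_iff₀ h1u2).1 h2
  refine ⟨?_, second, ?_⟩
  · calc β ^ 2 * ((n : ℝ) + 3) * u ^ (n + 2) = C * u ^ (n + 2) := by rw [hC_def]
      _ ≤ ((a - m * u) ^ 2)⁻¹ := first
  · calc β ^ 2 * (((n : ℝ) + 3) * u ^ (n + 2)) * (1 - u) ^ 2
        = C * u ^ (n + 2) * (1 - u) ^ 2 := by rw [hC_def]; ring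
      _ ≤ 1 := third
end
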